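/- Let (V;ρ,θ_V) be a representation of a 3-LieDer pair (L,θ_L). Then the operators d and δ on cochains commute: d∘δ = δ∘d as maps C^p(L;V) → C^{p+1}(L;V) for every p ≥ 1. -/

import Mathlib

open Function Finset

/-- Total skew-symmetry of a trilinear map (generated by adjacent transpositions). -/
def SkewTri {L V : Type*} [AddCommGroup V] (f : L → L → L → V) : Prop :=
  (∀ x y z, f x y z = - f y x z) ∧ (∀ x y z, f x y z = - f x z y)

/-- The fundamental identity of a 3-Lie algebra. -/
def FundId {L : Type*} [AddCommGroup L] (f : L → L → L → L) : Prop :=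
  ∀ x1 x2 x3 x4 x5,
    f x1 x2 (f x3 x4 x5)
      = f (f x1 x2 x3) x4 x5 + f x3 (f x1 x2 x4) x5 + f x3 x4 (f x1 x2 x5)

/-- Trilinearity of a map `L × L × L → V`. -/
def IsTrilin (F : Type*) {L V : Type*} [Field F] [AddCommGroup L] [Module F L]
    [AddCommGroup V] [Module F V] (f : L → L → L → V) : Prop :=
  (∀ y z, IsLinearMap F (fun x => f x y z)) ∧
  (∀ x z, IsLinearMap F (fun y => f x y z)) ∧
  (∀ x y, IsLinearMap F (fun z => f x y z))

/-- `θ` is a derivation of the ternary bracket `f`. -/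
def IsDeriv3 {W : Type*} [AddCommGroup W] (f : W → W → W → W) (θ : W → W) : Prop :=
  ∀ x y z, θ (f x y z) = f (θ x) y z + f x (θ y) z + f x y (θ z)

/-- `ρ` is a representation of the 3-Lie algebra `(L,f)` on `V`. -/
def IsRep3 (F : Type*) {L V : Type*} [Field F] [AddCommGroup L] [Module F L]
    [AddCommGroup V] [Module F V] (f : L → L → L → L) (ρ : L → L → V → V) : Prop :=
  (∀ y v, IsLinearMap F (fun x => ρ x y v)) ∧
  (∀ x v, IsLinearMap F (fun y => ρ x y v)) ∧
  (∀ x y, IsLinearMap F (ρ x y)) ∧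
  (∀ x y v, ρ x y v = - ρ y x v) ∧
  (∀ x1 x2 x3 x4 v, ρ x1 x2 (ρ x3 x4 v)
      = ρ (f x1 x2 x3) x4 v + ρ x3 (f x1 x2 x4) v + ρ x3 x4 (ρ x1 x2 v)) ∧
  (∀ x1 x2 x3 x4 v, ρ x1 (f x2 x3 x4) v
      = ρ x3 x4 (ρ x1 x2 v) - ρ x2 x4 (ρ x1 x3 v) + ρ x2 x3 (ρ x1 x4 v))

/-- `(ρ, θV)` is a representation of the 3-LieDer pair `(L, f, θL)` on `V`. -/
def IsRepPair (F : Type*) {L V : Type*} [Field F] [AddCommGroup L] [Module F L]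
    [AddCommGroup V] [Module F V] (f : L → L → L → L) (θL : L → L)
    (ρ : L → L → V → V) (θV : V → V) : Prop :=
  IsRep3 F f ρ ∧
  ∀ x y v, θV (ρ x y v) - ρ x y (θV v) = ρ (θL x) y v + ρ x (θL y) v

section Cochains

/-- `Cochain L V m` models the space `C^{m+1}(L;V) = Hom(⊗^m(∧²L) ⊗ L, V)` of
`(m+1)`-cochains; an element of `⊗^m(∧²L) ⊗ L` is presented by a tuple of `m`
pairs together with one further element. -/
abbrev Cochain (L V : Type*) (m : ℕ) := (Fin m → L × L) → L → V

variable {L V : Type*} [AddCommGroup L] [AddCommGroup V]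

/-- `c` is an honest cochain: it is `F`-linear in every slot and alternating in
each of the `m` pairs (so that it factors through `⊗^m(∧²L) ⊗ L`). -/
def IsCochain (F : Type*) [Field F] [Module F L] [Module F V]
    {m : ℕ} (c : Cochain L V m) : Prop :=
  (∀ (X : Fin m → L × L) (z : L) (i : Fin m) (a : F) (x x' : L),
      c (Function.update X i (a • x + x', (X i).2)) z
        = a • c (Function.update X i (x, (X i).2)) z
          + c (Function.update X i (x', (X i).2)) z) ∧
  (∀ (X : Fin m → L × L) (z : L) (i : Fin m) (a : F) (y y' : L),
      c (Function.update X i ((X i).1, a • y + y')) z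
        = a • c (Function.update X i ((X i).1, y)) z
          + c (Function.update X i ((X i).1, y')) z) ∧
  (∀ (X : Fin m → L × L) (a : F) (z z' : L),
      c X (a • z + z') = a • c X z + c X z') ∧
  (∀ (X : Fin m → L × L) (z : L) (i : Fin m) (x : L),
      c (Function.update X i (x, x)) z = 0)

/-- The coboundary operator `d : C^{m+1}(L;V) → C^{m+2}(L;V)` of the 3-Lie algebra
`(L, f)` with coefficients in the representation `ρ`.  The bracket
`[Xⱼ,Xₖ]_F = [xⱼ,yⱼ,xₖ]∧yₖ + xₖ∧[xⱼ,yⱼ,yₖ]` is expanded into its two wedge summands. -/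
def dOp (f : L → L → L → L) (ρ : L → L → V → V) {m : ℕ}
    (c : Cochain L V m) : Cochain L V (m + 1) :=
  fun X z =>
    (∑ j : Fin (m + 1), ∑ k : Fin (m + 1),
      if j < k then
        ((-1 : ℤ) ^ ((j : ℕ) + 1)) •
          (c (fun t => (Function.update X k
                (f (X j).1 (X j).2 (X k).1, (X k).2)) (j.succAbove t)) z
            + c (fun t => (Function.update X k
                ((X k).1, f (X j).1 (X j).2 (X k).2)) (j.succAbove t)) z)
      else 0)
    + ∑ j : Fin (m + 1),
        ((-1 : ℤ) ^ ((j : ℕ) + 1)) • c (fun t => X (j.succAbove t)) (f (X j).1 (X j).2 z)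
    + ∑ j : Fin (m + 1),
        ((-1 : ℤ) ^ (j : ℕ)) • ρ (X j).1 (X j).2 (c (fun t => X (j.succAbove t)) z)
    + ((-1 : ℤ) ^ m) •
        ρ (X (Fin.last m)).2 z (c (fun t : Fin m => X t.castSucc) (X (Fin.last m)).1)
    + ((-1 : ℤ) ^ (m + 1)) •
        ρ (X (Fin.last m)).1 z (c (fun t : Fin m => X t.castSucc) (X (Fin.last m)).2)

/-- The operator `δ : C^{m+1}(L;V) → C^{m+1}(L;V)` built from the derivations
`θL` and `θV`; `θL` acts on `∧²L` by `θL(x∧y) = θL(x)∧y + x∧θL(y)`. -/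
def deltaOp (θL : L → L) (θV : V → V) {m : ℕ} (c : Cochain L V m) : Cochain L V m :=
  fun X z =>
    (∑ i : Fin m,
      (c (Function.update X i (θL (X i).1, (X i).2)) z
        + c (Function.update X i ((X i).1, θL (X i).2)) z))
    + c X (θL z) - θV (c X z)

end Cochains
section S3aux

variable {L V : Type*} [AddCommGroup L] [AddCommGroup V]

/-! ### update/composition helpers -/

theorem comp_update_self {α : Type*} {m : ℕ} (j : Fin (m+1)) (X : Fin (m+1) → α) (v : α) :
    (fun t => (Function.update X j v) (j.succAbove t)) = fun t => X (j.succAbove t) := by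
  funext t
  exact Function.update_of_ne (Fin.succAbove_ne j t) _ _

theorem comp_update_succAbove {α : Type*} {m : ℕ} (j : Fin (m+1)) (t : Fin m)
    (X : Fin (m+1) → α) (v : α) :
    (fun s => (Function.update X (j.succAbove t) v) (j.succAbove s))
      = Function.update (fun s => X (j.succAbove s)) t v := by
  funext s
  rcases eq_or_ne s t with rfl | h
  · simp
  · rw [Function.update_of_ne h,
      Function.update_of_ne ((Fin.succAbove_right_injective (p := j)).ne h)]

theorem comp_update_update_self {α : Type*} {m : ℕ} (j k : Fin (m+1))
    (X : Fin (m+1) → α) (w v : α) :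
    (fun s => (Function.update (Function.update X j w) k v) (j.succAbove s))
      = fun s => (Function.update X k v) (j.succAbove s) := by
  funext s
  rcases eq_or_ne (j.succAbove s) k with h | h
  · rw [h]; simp
  · rw [Function.update_of_ne h, Function.update_of_ne h,
      Function.update_of_ne (Fin.succAbove_ne j s)]

theorem comp_update_update_comm {α : Type*} {m : ℕ} (j k : Fin (m+1)) (t : Fin m)
    (h : j.succAbove t ≠ k) (X : Fin (m+1) → α) (w v : α) :
    (fun s => (Function.update (Function.update X (j.succAbove t) w) k v) (j.succAbove s))
      = Function.update (fun s => (Function.update X k v) (j.succAbove s)) t w := by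
  rw [Function.update_comm h]
  exact comp_update_succAbove j t _ w

theorem comp_update_last {α : Type*} {m : ℕ} (X : Fin (m+1) → α) (v : α) :
    (fun t : Fin m => (Function.update X (Fin.last m) v) t.castSucc)
      = fun t => X t.castSucc := by
  funext t
  exact Function.update_of_ne (Fin.castSucc_lt_last t).ne _ _

theorem comp_update_castSucc {α : Type*} {m : ℕ} (t : Fin m) (X : Fin (m+1) → α) (v : α) :
    (fun s : Fin m => (Function.update X t.castSucc v) s.castSucc)
      = Function.update (fun s : Fin m => X s.castSucc) t v := by
  funext s
  rcases eq_or_ne s t with rfl | h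
  · simp
  · rw [Function.update_of_ne h,
      Function.update_of_ne (fun hh => h (Fin.castSucc_injective _ hh))]

/-! ### additivity of cochains -/

theorem c_addFst {F : Type*} [Field F] [Module F L] [Module F V] {m : ℕ}
    {c : Cochain L V m} (hc : IsCochain F c)
    (X : Fin m → L × L) (z : L) (i : Fin m) (x x' y : L) :
    c (Function.update X i (x + x', y)) z
      = c (Function.update X i (x, y)) z + c (Function.update X i (x', y)) z := by
  have h := hc.1 (Function.update X i (x, y)) z i 1 x x'
  simpa using h

theorem c_addSnd {F : Type*} [Field F] [Module F L] [Module F V] {m : ℕ}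
    {c : Cochain L V m} (hc : IsCochain F c)
    (X : Fin m → L × L) (z : L) (i : Fin m) (x y y' : L) :
    c (Function.update X i (x, y + y')) z
      = c (Function.update X i (x, y)) z + c (Function.update X i (x, y')) z := by
  have h := hc.2.1 (Function.update X i (x, y)) z i 1 y y'
  simpa using h

theorem c_addZ {F : Type*} [Field F] [Module F L] [Module F V] {m : ℕ}
    {c : Cochain L V m} (hc : IsCochain F c)
    (X : Fin m → L × L) (z z' : L) :
    c X (z + z') = c X z + c X z' := by
  have h := hc.2.2.1 X 1 z z'
  simpa using h

end S3aux
section S3terms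

variable {L V : Type*} [AddCommGroup L] [AddCommGroup V]

/-- First wedge summand of the double-sum term of `dOp`. -/
def T1A (f : L → L → L → L) {m : ℕ} (j k : Fin (m+1)) (c : Cochain L V m) :
    Cochain L V (m+1) :=
  fun X z => c (fun t => (Function.update X k
      (f (X j).1 (X j).2 (X k).1, (X k).2)) (j.succAbove t)) z

/-- Second wedge summand of the double-sum term of `dOp`. -/
def T1B (f : L → L → L → L) {m : ℕ} (j k : Fin (m+1)) (c : Cochain L V m) :
    Cochain L V (m+1) :=
  fun X z => c (fun t => (Function.update X k
      ((X k).1, f (X j).1 (X j).2 (X k).2)) (j.succAbove t)) z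

def T2' (f : L → L → L → L) {m : ℕ} (j : Fin (m+1)) (c : Cochain L V m) :
    Cochain L V (m+1) :=
  fun X z => c (fun t => X (j.succAbove t)) (f (X j).1 (X j).2 z)

def T3' (ρ : L → L → V → V) {m : ℕ} (j : Fin (m+1)) (c : Cochain L V m) :
    Cochain L V (m+1) :=
  fun X z => ρ (X j).1 (X j).2 (c (fun t => X (j.succAbove t)) z)

def T4' (ρ : L → L → V → V) {m : ℕ} (c : Cochain L V m) : Cochain L V (m+1) :=
  fun X z => ρ (X (Fin.last m)).2 z (c (fun t : Fin m => X t.castSucc) (X (Fin.last m)).1)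

def T5' (ρ : L → L → V → V) {m : ℕ} (c : Cochain L V m) : Cochain L V (m+1) :=
  fun X z => ρ (X (Fin.last m)).1 z (c (fun t : Fin m => X t.castSucc) (X (Fin.last m)).2)

theorem dOp_eq (f : L → L → L → L) (ρ : L → L → V → V) {m : ℕ} (c : Cochain L V m) :
    dOp f ρ c =
      (∑ j : Fin (m+1), ∑ k : Fin (m+1),
        if j < k then ((-1:ℤ)^((j:ℕ)+1)) • (T1A f j k c + T1B f j k c) else 0)
      + (∑ j : Fin (m+1), ((-1:ℤ)^((j:ℕ)+1)) • T2' f j c)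
      + (∑ j : Fin (m+1), ((-1:ℤ)^(j:ℕ)) • T3' ρ j c)
      + ((-1:ℤ)^m) • T4' ρ c + ((-1:ℤ)^(m+1)) • T5' ρ c := by
  funext X z
  simp only [dOp, T1A, T1B, T2', T3', T4', T5', Pi.add_apply, Pi.smul_apply,
    Finset.sum_apply, ite_apply, Pi.zero_apply]

end S3terms
section S3dlin

set_option linter.unusedSectionVars false

variable {L V : Type*} [AddCommGroup L] [AddCommGroup V]
variable (θL : L → L) (θV : V → V)

theorem delta_add (hθV : ∀ a b : V, θV (a + b) = θV a + θV b) {m : ℕ}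
    (c1 c2 : Cochain L V m) :
    deltaOp θL θV (c1 + c2) = deltaOp θL θV c1 + deltaOp θL θV c2 := by
  funext X z
  simp only [deltaOp, Pi.add_apply, hθV, Finset.sum_add_distrib]
  abel

theorem delta_zero (hθV0 : θV 0 = 0) {m : ℕ} :
    deltaOp θL θV (0 : Cochain L V m) = 0 := by
  funext X z
  simp [deltaOp, hθV0]

theorem delta_zsmul (hθV : ∀ a b : V, θV (a + b) = θV a + θV b) (n : ℤ) {m : ℕ}
    (c : Cochain L V m) :
    deltaOp θL θV (n • c) = n • deltaOp θL θV c := by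
  have hz : ∀ v : V, θV (n • v) = n • θV v := fun v =>
    map_zsmul (AddMonoidHom.mk' θV hθV) n v
  funext X z
  simp only [deltaOp, Pi.smul_apply, hz, smul_add, smul_sub, Finset.smul_sum]

theorem delta_sum (hθV0 : θV 0 = 0) (hθV : ∀ a b : V, θV (a + b) = θV a + θV b)
    {ι : Type*} (s : Finset ι) {m : ℕ} (g : ι → Cochain L V m) :
    deltaOp θL θV (∑ i ∈ s, g i) = ∑ i ∈ s, deltaOp θL θV (g i) := by
  classical
  induction s using Finset.induction_on with
  | empty => simpa using delta_zero θL θV hθV0 (m := m)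
  | insert _ _ h ih =>
      rw [Finset.sum_insert h, Finset.sum_insert h, delta_add θL θV hθV, ih]

end S3dlin
section S3T2
set_option linter.unusedSectionVars false
set_option maxHeartbeats 1000000

variable {L V : Type*} [AddCommGroup L] [AddCommGroup V]
variable (f : L → L → L → L) (θL : L → L) (θV : V → V)

theorem delta_T2 {m : ℕ} (j : Fin (m+1)) (c : Cochain L V m)
    (hc3 : ∀ (X : Fin m → L × L) (z z' : L), c X (z + z') = c X z + c X z')
    (hder : IsDeriv3 f θL) :
    deltaOp θL θV (T2' f j c) = T2' f j (deltaOp θL θV c) := by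
  funext X z
  have hXj : ∀ (t : Fin m) (v : L × L), Function.update X (j.succAbove t) v j = X j :=
    fun t v => Function.update_of_ne (Fin.succAbove_ne j t).symm _ _
  simp only [deltaOp, T2']
  rw [Fin.sum_univ_succAbove _ j]
  simp only [Function.update_self, hXj, comp_update_self, comp_update_succAbove]
  rw [hder, hc3, hc3]
  abel
end S3T2
section S3T3
set_option linter.unusedSectionVars false
set_option maxHeartbeats 1000000

variable {L V : Type*} [AddCommGroup L] [AddCommGroup V]
variable (ρ : L → L → V → V) (θL : L → L) (θV : V → V)

theorem delta_T3 {m : ℕ} (j : Fin (m+1)) (c : Cochain L V m)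
    (hρ : ∀ x y (a b : V), ρ x y (a + b) = ρ x y a + ρ x y b)
    (hpair : ∀ x y v, θV (ρ x y v) = ρ x y (θV v) + ρ (θL x) y v + ρ x (θL y) v) :
    deltaOp θL θV (T3' ρ j c) = T3' ρ j (deltaOp θL θV c) := by
  funext X z
  have hXj : ∀ (t : Fin m) (v : L × L), Function.update X (j.succAbove t) v j = X j :=
    fun t v => Function.update_of_ne (Fin.succAbove_ne j t).symm _ _
  have hsub : ∀ a b : V, ρ (X j).1 (X j).2 (a - b)
      = ρ (X j).1 (X j).2 a - ρ (X j).1 (X j).2 b :=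
    fun a b => (AddMonoidHom.mk' (ρ (X j).1 (X j).2) (hρ _ _)).map_sub a b
  have hsum : ∀ (g : Fin m → V), ρ (X j).1 (X j).2 (∑ t, g t) = ∑ t, ρ (X j).1 (X j).2 (g t) :=
    fun g => map_sum (AddMonoidHom.mk' (ρ (X j).1 (X j).2) (hρ _ _)) g Finset.univ
  simp only [deltaOp, T3']
  rw [Fin.sum_univ_succAbove _ j]
  simp only [Function.update_self, hXj, comp_update_self, comp_update_succAbove]
  rw [hpair]
  rw [hsub, hρ, hsum]
  simp only [hρ]
  abel
end S3T3
section S3T45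
set_option linter.unusedSectionVars false
set_option maxHeartbeats 1000000

variable {L V : Type*} [AddCommGroup L] [AddCommGroup V]
variable (ρ : L → L → V → V) (θL : L → L) (θV : V → V)

theorem delta_T4 {m : ℕ} (c : Cochain L V m)
    (hρ : ∀ x y (a b : V), ρ x y (a + b) = ρ x y a + ρ x y b)
    (hpair : ∀ x y v, θV (ρ x y v) = ρ x y (θV v) + ρ (θL x) y v + ρ x (θL y) v) :
    deltaOp θL θV (T4' ρ c) = T4' ρ (deltaOp θL θV c) := by
  funext X z
  have hXl : ∀ (t : Fin m) (v : L × L),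
      Function.update X t.castSucc v (Fin.last m) = X (Fin.last m) :=
    fun t v => Function.update_of_ne (Fin.castSucc_lt_last t).ne' _ _
  have hsub : ∀ a b : V, ρ (X (Fin.last m)).2 z (a - b)
      = ρ (X (Fin.last m)).2 z a - ρ (X (Fin.last m)).2 z b :=
    fun a b => (AddMonoidHom.mk' (ρ (X (Fin.last m)).2 z) (hρ _ _)).map_sub a b
  have hsum : ∀ (g : Fin m → V), ρ (X (Fin.last m)).2 z (∑ t, g t)
      = ∑ t, ρ (X (Fin.last m)).2 z (g t) :=
    fun g => map_sum (AddMonoidHom.mk' (ρ (X (Fin.last m)).2 z) (hρ _ _)) g Finset.univ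
  simp only [deltaOp, T4']
  rw [Fin.sum_univ_castSucc]
  simp only [Function.update_self, hXl, comp_update_last, comp_update_castSucc]
  rw [hpair]
  rw [hsub, hρ, hsum]
  simp only [hρ]
  abel

theorem delta_T5 {m : ℕ} (c : Cochain L V m)
    (hρ : ∀ x y (a b : V), ρ x y (a + b) = ρ x y a + ρ x y b)
    (hpair : ∀ x y v, θV (ρ x y v) = ρ x y (θV v) + ρ (θL x) y v + ρ x (θL y) v) :
    deltaOp θL θV (T5' ρ c) = T5' ρ (deltaOp θL θV c) := by
  funext X z
  have hXl : ∀ (t : Fin m) (v : L × L),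
      Function.update X t.castSucc v (Fin.last m) = X (Fin.last m) :=
    fun t v => Function.update_of_ne (Fin.castSucc_lt_last t).ne' _ _
  have hsub : ∀ a b : V, ρ (X (Fin.last m)).1 z (a - b)
      = ρ (X (Fin.last m)).1 z a - ρ (X (Fin.last m)).1 z b :=
    fun a b => (AddMonoidHom.mk' (ρ (X (Fin.last m)).1 z) (hρ _ _)).map_sub a b
  have hsum : ∀ (g : Fin m → V), ρ (X (Fin.last m)).1 z (∑ t, g t)
      = ∑ t, ρ (X (Fin.last m)).1 z (g t) :=
    fun g => map_sum (AddMonoidHom.mk' (ρ (X (Fin.last m)).1 z) (hρ _ _)) g Finset.univ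
  simp only [deltaOp, T5']
  rw [Fin.sum_univ_castSucc]
  simp only [Function.update_self, hXl, comp_update_last, comp_update_castSucc]
  rw [hpair]
  rw [hsub, hρ, hsum]
  simp only [hρ]
  abel
end S3T45
section S3T1
set_option linter.unusedSectionVars false
set_option maxHeartbeats 1000000

variable {L V : Type*} [AddCommGroup L] [AddCommGroup V]
variable (f : L → L → L → L) (θL : L → L) (θV : V → V)

theorem delta_T1A {m : ℕ} (j k : Fin (m+1)) (hjk : k ≠ j) (c : Cochain L V m)
    (hc1 : ∀ (X : Fin m → L × L) (z : L) (i : Fin m) (x x' y : L),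
      c (Function.update X i (x + x', y)) z
        = c (Function.update X i (x, y)) z + c (Function.update X i (x', y)) z)
    (hder : IsDeriv3 f θL) :
    deltaOp θL θV (T1A f j k c) = T1A f j k (deltaOp θL θV c) := by
  funext X z
  obtain ⟨tk, htk⟩ := Fin.exists_succAbove_eq hjk
  have hXj : ∀ (t : Fin m) (v : L × L), Function.update X (j.succAbove t) v j = X j :=
    fun t v => Function.update_of_ne (Fin.succAbove_ne j t).symm _ _
  have hXkj : ∀ v : L × L, Function.update X j v k = X k :=
    fun v => Function.update_of_ne hjk _ _
  simp only [deltaOp, T1A]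
  rw [Fin.sum_univ_succAbove _ j]
  simp only [Function.update_self, hXj, hXkj, comp_update_update_self]
  rw [Finset.sum_eq_sum_sdiff_singleton_add (Finset.mem_univ tk),
    Finset.sum_eq_sum_sdiff_singleton_add (Finset.mem_univ tk)]
  have hcong :
      (∑ x ∈ Finset.univ \ {tk},
        (c (fun t => Function.update
              (Function.update X (j.succAbove x) (θL (X (j.succAbove x)).1, (X (j.succAbove x)).2)) k
              (f (X j).1 (X j).2
                  (Function.update X (j.succAbove x) (θL (X (j.succAbove x)).1, (X (j.succAbove x)).2) k).1,
                (Function.update X (j.succAbove x) (θL (X (j.succAbove x)).1, (X (j.succAbove x)).2) k).2)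
              (j.succAbove t)) z
          + c (fun t => Function.update
              (Function.update X (j.succAbove x) ((X (j.succAbove x)).1, θL (X (j.succAbove x)).2)) k
              (f (X j).1 (X j).2
                  (Function.update X (j.succAbove x) ((X (j.succAbove x)).1, θL (X (j.succAbove x)).2) k).1,
                (Function.update X (j.succAbove x) ((X (j.succAbove x)).1, θL (X (j.succAbove x)).2) k).2)
              (j.succAbove t)) z))
      = ∑ x ∈ Finset.univ \ {tk},
        (c (Function.update (fun t => Function.update X k (f (X j).1 (X j).2 (X k).1, (X k).2) (j.succAbove t)) x
              (θL (Function.update X k (f (X j).1 (X j).2 (X k).1, (X k).2) (j.succAbove x)).1,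
                (Function.update X k (f (X j).1 (X j).2 (X k).1, (X k).2) (j.succAbove x)).2)) z
          + c (Function.update (fun t => Function.update X k (f (X j).1 (X j).2 (X k).1, (X k).2) (j.succAbove t)) x
              ((Function.update X k (f (X j).1 (X j).2 (X k).1, (X k).2) (j.succAbove x)).1,
                θL (Function.update X k (f (X j).1 (X j).2 (X k).1, (X k).2) (j.succAbove x)).2)) z) := by
    refine Finset.sum_congr rfl fun x hx => ?_
    have hxne : x ≠ tk := by
      have := (Finset.mem_sdiff.mp hx).2
      simpa using this
    have hk : j.succAbove x ≠ k := by
      rw [← htk]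
      exact (Fin.succAbove_right_injective (p := j)).ne hxne
    simp only [Function.update_of_ne hk.symm, Function.update_of_ne hk,
      comp_update_update_comm j k x hk]
  rw [hcong, htk]
  simp only [Function.update_self, Function.update_idem]
  have hkey : ∀ w : L × L,
      Function.update (fun t => Function.update X k (f (X j).1 (X j).2 (X k).1, (X k).2) (j.succAbove t)) tk w
        = fun s => Function.update X k w (j.succAbove s) := by
    intro w
    rw [← comp_update_succAbove j tk (Function.update X k (f (X j).1 (X j).2 (X k).1, (X k).2)) w,
      htk]
    simp only [Function.update_idem]
  rw [hder]
  rw [hc1, hc1]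
  simp only [hkey]
  abel
end S3T1

section S3T1B
set_option linter.unusedSectionVars false
set_option maxHeartbeats 1000000

variable {L V : Type*} [AddCommGroup L] [AddCommGroup V]
variable (f : L → L → L → L) (θL : L → L) (θV : V → V)

theorem delta_T1B {m : ℕ} (j k : Fin (m+1)) (hjk : k ≠ j) (c : Cochain L V m)
    (hc2 : ∀ (X : Fin m → L × L) (z : L) (i : Fin m) (x y y' : L),
      c (Function.update X i (x, y + y')) z
        = c (Function.update X i (x, y)) z + c (Function.update X i (x, y')) z)
    (hder : IsDeriv3 f θL) :
    deltaOp θL θV (T1B f j k c) = T1B f j k (deltaOp θL θV c) := by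
  funext X z
  obtain ⟨tk, htk⟩ := Fin.exists_succAbove_eq hjk
  have hXj : ∀ (t : Fin m) (v : L × L), Function.update X (j.succAbove t) v j = X j :=
    fun t v => Function.update_of_ne (Fin.succAbove_ne j t).symm _ _
  have hXkj : ∀ v : L × L, Function.update X j v k = X k :=
    fun v => Function.update_of_ne hjk _ _
  simp only [deltaOp, T1B]
  rw [Fin.sum_univ_succAbove _ j]
  simp only [Function.update_self, hXj, hXkj, comp_update_update_self]
  rw [Finset.sum_eq_sum_sdiff_singleton_add (Finset.mem_univ tk),
    Finset.sum_eq_sum_sdiff_singleton_add (Finset.mem_univ tk)]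
  have hcong :
      (∑ x ∈ Finset.univ \ {tk},
        (c (fun t => Function.update
              (Function.update X (j.succAbove x) (θL (X (j.succAbove x)).1, (X (j.succAbove x)).2)) k
              ((Function.update X (j.succAbove x) (θL (X (j.succAbove x)).1, (X (j.succAbove x)).2) k).1,
                f (X j).1 (X j).2
                  (Function.update X (j.succAbove x) (θL (X (j.succAbove x)).1, (X (j.succAbove x)).2) k).2)
              (j.succAbove t)) z
          + c (fun t => Function.update
              (Function.update X (j.succAbove x) ((X (j.succAbove x)).1, θL (X (j.succAbove x)).2)) k
              ((Function.update X (j.succAbove x) ((X (j.succAbove x)).1, θL (X (j.succAbove x)).2) k).1,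
                f (X j).1 (X j).2
                  (Function.update X (j.succAbove x) ((X (j.succAbove x)).1, θL (X (j.succAbove x)).2) k).2)
              (j.succAbove t)) z))
      = ∑ x ∈ Finset.univ \ {tk},
        (c (Function.update (fun t => Function.update X k ((X k).1, f (X j).1 (X j).2 (X k).2) (j.succAbove t)) x
              (θL (Function.update X k ((X k).1, f (X j).1 (X j).2 (X k).2) (j.succAbove x)).1,
                (Function.update X k ((X k).1, f (X j).1 (X j).2 (X k).2) (j.succAbove x)).2)) z
          + c (Function.update (fun t => Function.update X k ((X k).1, f (X j).1 (X j).2 (X k).2) (j.succAbove t)) x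
              ((Function.update X k ((X k).1, f (X j).1 (X j).2 (X k).2) (j.succAbove x)).1,
                θL (Function.update X k ((X k).1, f (X j).1 (X j).2 (X k).2) (j.succAbove x)).2)) z) := by
    refine Finset.sum_congr rfl fun x hx => ?_
    have hxne : x ≠ tk := by
      have := (Finset.mem_sdiff.mp hx).2
      simpa using this
    have hk : j.succAbove x ≠ k := by
      rw [← htk]
      exact (Fin.succAbove_right_injective (p := j)).ne hxne
    simp only [Function.update_of_ne hk.symm, Function.update_of_ne hk,
      comp_update_update_comm j k x hk]
  rw [hcong, htk]
  simp only [Function.update_self, Function.update_idem]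
  have hkey : ∀ w : L × L,
      Function.update (fun t => Function.update X k ((X k).1, f (X j).1 (X j).2 (X k).2) (j.succAbove t)) tk w
        = fun s => Function.update X k w (j.succAbove s) := by
    intro w
    rw [← comp_update_succAbove j tk (Function.update X k ((X k).1, f (X j).1 (X j).2 (X k).2)) w,
      htk]
    simp only [Function.update_idem]
  rw [hder]
  rw [hc2, hc2]
  simp only [hkey]
  abel
end S3T1B

/-- Let `(V; ρ, θV)` be a representation of the 3-LieDer pair
`(L, f, θL)`.  Then the operators `d` and `δ` commute on cochains:
`d ∘ δ = δ ∘ d` as maps `C^p(L;V) → C^{p+1}(L;V)` for every `p ≥ 1`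
(here `p = m + 1`). -/
theorem statement3 {F L V : Type*} [Field F] [CharZero F]
    [AddCommGroup L] [Module F L] [FiniteDimensional F L]
    [AddCommGroup V] [Module F V] [FiniteDimensional F V]
    (f : L → L → L → L) (hf3 : IsTrilin F f) (hfskew : SkewTri f) (hfFI : FundId f)
    (θL : L → L) (hθLlin : IsLinearMap F θL) (hθL : IsDeriv3 f θL)
    (ρ : L → L → V → V) (θV : V → V) (hθVlin : IsLinearMap F θV)
    (hrep : IsRepPair F f θL ρ θV)
    (m : ℕ) (c : Cochain L V m) (hc : IsCochain F c) :
    dOp f ρ (deltaOp θL θV c) = deltaOp θL θV (dOp f ρ c) := by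
  classical
  obtain ⟨⟨hρl1, hρl2, hρl3, hρskew, hrep1, hrep2⟩, hpair0⟩ := hrep
  have hθVadd : ∀ a b : V, θV (a + b) = θV a + θV b := fun a b => hθVlin.map_add a b
  have hθV0 : θV 0 = 0 := hθVlin.map_zero
  have hρadd : ∀ x y (a b : V), ρ x y (a + b) = ρ x y a + ρ x y b :=
    fun x y a b => (hρl3 x y).map_add a b
  have hpair : ∀ x y v, θV (ρ x y v) = ρ x y (θV v) + ρ (θL x) y v + ρ x (θL y) v := by
    intro x y v
    have h := sub_eq_iff_eq_add.mp (hpair0 x y v)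
    rw [h]
    abel
  have hc1 := c_addFst hc
  have hc2 := c_addSnd hc
  have hc3 := c_addZ hc
  rw [dOp_eq f ρ (deltaOp θL θV c), dOp_eq f ρ c]
  rw [delta_add θL θV hθVadd, delta_add θL θV hθVadd, delta_add θL θV hθVadd,
    delta_add θL θV hθVadd]
  rw [delta_sum θL θV hθV0 hθVadd, delta_sum θL θV hθV0 hθVadd, delta_sum θL θV hθV0 hθVadd,
    delta_zsmul θL θV hθVadd, delta_zsmul θL θV hθVadd,
    delta_T4 ρ θL θV c hρadd hpair, delta_T5 ρ θL θV c hρadd hpair]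
  congr 1
  congr 1
  congr 1
  congr 1
  · refine Finset.sum_congr rfl fun j _ => ?_
    rw [delta_sum θL θV hθV0 hθVadd]
    refine Finset.sum_congr rfl fun k _ => ?_
    by_cases h : j < k
    · rw [if_pos h, if_pos h, delta_zsmul θL θV hθVadd, delta_add θL θV hθVadd,
        delta_T1A f θL θV j k (ne_of_lt h).symm c hc1 hθL,
        delta_T1B f θL θV j k (ne_of_lt h).symm c hc2 hθL]
    · rw [if_neg h, if_neg h, delta_zero θL θV hθV0]
  · refine Finset.sum_congr rfl fun j _ => ?_
    rw [delta_zsmul θL θV hθVadd, delta_T2 f θL θV j c hc3 hθL]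
  · refine Finset.sum_congr rfl fun j _ => ?_
    rw [delta_zsmul θL θV hθVadd, delta_T3 ρ θL θV j c hρadd hpair]
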